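/- Let μ be a Borel probability measure on a metric space, p ≥ 1, and suppose there exist r₀ > 0 and a₀ ∈ [0, 1/2) such that for every Borel set A ⊆ X with μ(A) ≥ 1/2 one has μ(A_{r₀}) ≥ 1 - a₀, where A_r = {x : d(x,A) ≤ r}. Suppose further this is stable under taking enlargements and products (i.e., the hypothesis of Proposition 'Cor Tal 2' with 𝒜ₙ = all Borel sets). Then for every γ ∈ (-log(1-a₀)/log 2, 1) there exists c ∈ [1/2, 1) (depending only on γ and a₀) such that for every Borel set A with μ(A) ≥ c, μ(A_r) ≥ 1 - ((1-c)/γ)·γ^{r/r₀} for all r ≥ 0. -/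

import Mathlib

open MeasureTheory Set

/-- The `ℓ_p` product distance on `Xⁿ`: `d_p(x,y) = (∑ᵢ d(xᵢ,yᵢ)^p)^{1/p}`. -/
noncomputable def dlp {X : Type*} [MetricSpace X] {n : ℕ} (p : ℝ) (x y : Fin n → X) : ℝ :=
  (∑ i, dist (x i) (y i) ^ p) ^ (1 / p)

/-- The `ℓ_p` enlargement `A_{r,p} = {x : d_p(x,A) ≤ r}` of a set `A ⊆ Xⁿ`
(with `d_p(x,A) = inf_{a ∈ A} d_p(x,a)`). -/
noncomputable def enl {X : Type*} [MetricSpace X] {n : ℕ} (p r : ℝ)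
    (A : Set (Fin n → X)) : Set (Fin n → X) :=
  {z | sInf ((fun a => dlp p z a) '' A) ≤ r}

/-- Product step: if `μ(A) ≥ u` with `u^n ≥ 1/2`, then `μ(A_{r₀}) ≥ (1-a₀)^{1/n}`. -/
lemma prod_step {X : Type*} [MetricSpace X] [MeasurableSpace X]
    [OpensMeasurableSpace X] (μ : Measure X) [IsProbabilityMeasure μ]
    (p : ℝ) (hp : 1 ≤ p) (r₀ a₀ : ℝ) (ha₀ : 0 ≤ a₀) (ha₁ : a₀ < 1)
    (H : ∀ n : ℕ, ∀ A : Set (Fin n → X), MeasurableSet A →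
      1 / 2 ≤ (Measure.pi fun _ : Fin n => μ) A →
      1 - ENNReal.ofReal a₀ ≤ (Measure.pi fun _ : Fin n => μ) (enl p r₀ A))
    (n : ℕ) (hn : 0 < n) (A : Set X) (hA : MeasurableSet A) (hne : A.Nonempty)
    (u : ℝ) (hu0 : 0 ≤ u) (hun : 1 / 2 ≤ u ^ n) (huA : ENNReal.ofReal u ≤ μ A) :
    ENNReal.ofReal ((1 - a₀) ^ ((n : ℝ)⁻¹)) ≤ μ {x | Metric.infDist x A ≤ r₀} := by
  have hp0 : 0 < p := lt_of_lt_of_le one_pos hp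
  set B : Set X := {x | Metric.infDist x A ≤ r₀} with hB
  have hBmeas : MeasurableSet B :=
    (isClosed_le (Metric.continuous_infDist_pt A) continuous_const).measurableSet
  set An : Set (Fin n → X) := Set.pi Set.univ (fun _ => A) with hAn
  have hAnmeas : MeasurableSet An := MeasurableSet.univ_pi fun _ => hA
  have hAnval : (Measure.pi fun _ : Fin n => μ) An = (μ A) ^ n := by
    rw [hAn, Measure.pi_pi]; simp [Finset.prod_const]
  have h12 : 1 / 2 ≤ (Measure.pi fun _ : Fin n => μ) An := by
    rw [hAnval]
    calc (1 / 2 : ENNReal) ≤ ENNReal.ofReal (u ^ n) := by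
          rw [show ((1:ENNReal)/2) = ENNReal.ofReal (1/2) by
            rw [ENNReal.ofReal_div_of_pos (by norm_num)]; simp]
          exact ENNReal.ofReal_le_ofReal hun
      _ = (ENNReal.ofReal u) ^ n := ENNReal.ofReal_pow hu0 n
      _ ≤ (μ A) ^ n := pow_le_pow_left' huA n
  have hH := H n An hAnmeas h12
  have hsub : enl p r₀ An ⊆ Set.pi Set.univ (fun _ : Fin n => B) := by
    intro z hz i _
    show Metric.infDist (z i) A ≤ r₀
    refine le_of_forall_pos_le_add fun ε hε => ?_
    have hAnne : An.Nonempty := by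
      obtain ⟨a, ha⟩ := hne
      exact ⟨fun _ => a, fun i _ => ha⟩
    have himne : ((fun a => dlp p z a) '' An).Nonempty := hAnne.image _
    have hlt : sInf ((fun a => dlp p z a) '' An) < r₀ + ε := lt_of_le_of_lt hz (by linarith)
    have hbdd : BddBelow ((fun a => dlp p z a) '' An) := by
      refine ⟨0, fun d hd => ?_⟩
      obtain ⟨a, _, rfl⟩ := hd
      exact Real.rpow_nonneg
        (Finset.sum_nonneg fun j _ => Real.rpow_nonneg dist_nonneg p) _
    obtain ⟨d, hd, hdlt⟩ := (csInf_lt_iff hbdd himne).mp hlt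
    obtain ⟨a, haAn, rfl⟩ := hd
    have hai : a i ∈ A := haAn i (Set.mem_univ i)
    have hterm : dist (z i) (a i) ^ p ≤ ∑ j, dist (z j) (a j) ^ p :=
      Finset.single_le_sum (fun j _ => Real.rpow_nonneg dist_nonneg p)
        (Finset.mem_univ i)
    have hdist : dist (z i) (a i) < r₀ + ε := by
      have h1 : (dist (z i) (a i) ^ p) ^ (1 / p) ≤ (∑ j, dist (z j) (a j) ^ p) ^ (1 / p) :=
        Real.rpow_le_rpow (Real.rpow_nonneg dist_nonneg p) hterm (by positivity)
      rw [one_div, Real.rpow_rpow_inv dist_nonneg (ne_of_gt hp0)] at h1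
      simp only [dlp, one_div] at hdlt
      exact lt_of_le_of_lt h1 hdlt
    exact le_of_lt (lt_of_le_of_lt (Metric.infDist_le_dist_of_mem hai) hdist)
  have hBn : (Measure.pi fun _ : Fin n => μ) (Set.pi Set.univ (fun _ : Fin n => B))
      = (μ B) ^ n := by
    rw [Measure.pi_pi]; simp [Finset.prod_const]
  have hkey : ENNReal.ofReal (1 - a₀) ≤ (μ B) ^ n := by
    have h := le_trans hH (measure_mono hsub)
    rw [hBn] at h
    calc ENNReal.ofReal (1 - a₀) = 1 - ENNReal.ofReal a₀ := by
          rw [ENNReal.ofReal_sub _ ha₀]; simp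
      _ ≤ (μ B) ^ n := h
  have hn' : (n : ℝ) ≠ 0 := Nat.cast_ne_zero.mpr hn.ne'
  have h2 := ENNReal.rpow_le_rpow hkey (by positivity : (0:ℝ) ≤ (n:ℝ)⁻¹)
  rwa [ENNReal.ofReal_rpow_of_pos (by linarith), ← ENNReal.rpow_natCast (μ B) n,
    ← ENNReal.rpow_mul, mul_inv_cancel₀ hn', ENNReal.rpow_one] at h2

/-- Single-step improvement: if `μ(A) ≥ 1 - v` for suitably small `v > 0`, then
`μ(A_{r₀}) ≥ 1 - γ v`. -/
lemma single_step {X : Type*} [MetricSpace X] [MeasurableSpace X]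
    [OpensMeasurableSpace X] (μ : Measure X) [IsProbabilityMeasure μ]
    (p : ℝ) (hp : 1 ≤ p) (r₀ a₀ : ℝ) (ha₀ : 0 ≤ a₀) (ha₁ : a₀ < 1)
    (H : ∀ n : ℕ, ∀ A : Set (Fin n → X), MeasurableSet A →
      1 / 2 ≤ (Measure.pi fun _ : Fin n => μ) A →
      1 - ENNReal.ofReal a₀ ≤ (Measure.pi fun _ : Fin n => μ) (enl p r₀ A))
    (γ : ℝ) (hγ0 : 0 < γ) (v : ℝ) (hv0 : 0 < v) (hv2 : v ≤ 1 / 2)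
    (hv : v * (1 + Real.log 2) ≤ Real.log 2 - (-Real.log (1 - a₀)) / γ)
    (A : Set X) (hA : MeasurableSet A) (hne : A.Nonempty)
    (huA : ENNReal.ofReal (1 - v) ≤ μ A) :
    ENNReal.ofReal (1 - γ * v) ≤ μ {x | Metric.infDist x A ≤ r₀} := by
  set β : ℝ := -Real.log (1 - a₀) with hβ
  have hβ0 : 0 ≤ β := by
    have h := Real.log_nonpos (by linarith : (0:ℝ) ≤ 1 - a₀) (by linarith : 1 - a₀ ≤ 1)
    simp only [hβ]; linarith
  have h1v : (0:ℝ) < 1 - v := by linarith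
  have hL0 : (0:ℝ) < -Real.log (1 - v) := by
    have h := Real.log_neg h1v (by linarith : 1 - v < 1)
    linarith
  set L : ℝ := -Real.log (1 - v) with hLdef
  set n : ℕ := ⌊Real.log 2 / L⌋₊ with hndef
  have hlog2 : (0:ℝ) < Real.log 2 := Real.log_pos (by norm_num)
  have hLle : L ≤ Real.log 2 := by
    have h : Real.log (1 / 2) ≤ Real.log (1 - v) :=
      Real.log_le_log (by norm_num) (by linarith)
    rw [Real.log_div one_ne_zero (by norm_num), Real.log_one] at h
    simp only [hLdef]; linarith
  have hn1 : 1 ≤ n := Nat.le_floor (by rw [Nat.cast_one, le_div_iff₀ hL0]; linarith)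
  have hnpos : 0 < n := hn1
  have hnR : (0:ℝ) < n := Nat.cast_pos.mpr hnpos
  -- (1-v)^n ≥ 1/2
  have hpow : 1 / 2 ≤ (1 - v) ^ n := by
    have hfle : (n : ℝ) ≤ Real.log 2 / L := Nat.floor_le (by positivity)
    have h2 : (n : ℝ) * L ≤ Real.log 2 := (le_div_iff₀ hL0).mp hfle
    have h3 : Real.log (1 / 2) ≤ Real.log ((1 - v) ^ n) := by
      rw [Real.log_pow, Real.log_div one_ne_zero (by norm_num), Real.log_one]
      have h4 : (n : ℝ) * Real.log (1 - v) = -((n : ℝ) * L) := by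
        simp only [hLdef]; ring
      rw [h4]; linarith
    exact (Real.log_le_log_iff (by norm_num) (pow_pos h1v n)).mp h3
  -- β/n ≤ γ v
  have hβn : β / n ≤ γ * v := by
    have hLv : L ≤ v / (1 - v) := by
      have h1 : Real.log (1 - v)⁻¹ ≤ (1 - v)⁻¹ - 1 :=
        Real.log_le_sub_one_of_pos (by positivity)
      rw [Real.log_inv] at h1
      have h2 : (1 - v)⁻¹ - 1 = v / (1 - v) := by field_simp; ring
      simp only [hLdef]; linarith [h2 ▸ h1]
    have hd1 : Real.log 2 / (v / (1 - v)) ≤ Real.log 2 / L :=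
      div_le_div_of_nonneg_left hlog2.le hL0 hLv
    have hd2 : Real.log 2 / (v / (1 - v)) = (Real.log 2 * (1 - v) - v) / v + 1 := by
      field_simp
      ring
    have hnlb : Real.log 2 / L - 1 < (n : ℝ) := Nat.sub_one_lt_floor _
    have h5 : (Real.log 2 * (1 - v) - v) / v < (n : ℝ) := by
      rw [hd2] at hd1; linarith
    have h6 : β / γ ≤ Real.log 2 * (1 - v) - v := by
      have h7 : Real.log 2 * (1 - v) - v = Real.log 2 - v * (1 + Real.log 2) := by ring
      rw [h7]
      rw [hβ] at *
      linarith
    have h8 : β / γ < (n : ℝ) * v := by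
      have h9 := (div_lt_iff₀ hv0).mp h5
      linarith
    have h10 : β < (n : ℝ) * v * γ := (div_lt_iff₀ hγ0).mp h8
    rw [div_le_iff₀ hnR]; nlinarith
  have hpowval : (1 - a₀) ^ ((n:ℝ)⁻¹) = Real.exp (-(β / n)) := by
    rw [Real.rpow_def_of_pos (by linarith : (0:ℝ) < 1 - a₀)]
    congr 1
    simp only [hβ]; field_simp
  have hstep : 1 - γ * v ≤ (1 - a₀) ^ ((n:ℝ)⁻¹) := by
    rw [hpowval]
    have h := Real.add_one_le_exp (-(β / n))
    linarith
  have hmain := prod_step μ p hp r₀ a₀ ha₀ ha₁ H n hnpos A hA hne (1 - v)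
    (by linarith) hpow huA
  exact le_trans (ENNReal.ofReal_le_ofReal hstep) hmain

/-- self-improvement of dimension free concentration, Talagrand's
argument: if for some `r₀ > 0` and `a₀ ∈ [0,1/2)` every Borel `A ⊆ Xⁿ` (any `n`) with
`μⁿ(A) ≥ 1/2` satisfies `μⁿ(A_{r₀,p}) ≥ 1 - a₀`, then for every
`γ ∈ (-log(1-a₀)/log 2, 1)` there is `c ∈ [1/2,1)` depending only on `γ` and `a₀`
such that every Borel `A ⊆ X` with `μ(A) ≥ c` satisfies
`μ(A_r) ≥ 1 - ((1-c)/γ) γ^{r/r₀}` for all `r ≥ 0`. -/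
theorem concentration_self_improvement {X : Type*} [MetricSpace X] [MeasurableSpace X]
    [OpensMeasurableSpace X] (μ : Measure X) [IsProbabilityMeasure μ]
    (p : ℝ) (hp : 1 ≤ p) (r₀ a₀ : ℝ) (hr₀ : 0 < r₀) (ha₀ : 0 ≤ a₀) (ha₀' : a₀ < 1 / 2)
    (H : ∀ n : ℕ, ∀ A : Set (Fin n → X), MeasurableSet A →
      1 / 2 ≤ (Measure.pi fun _ : Fin n => μ) A →
      1 - ENNReal.ofReal a₀ ≤ (Measure.pi fun _ : Fin n => μ) (enl p r₀ A)) :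
    ∀ γ : ℝ, -Real.log (1 - a₀) / Real.log 2 < γ → γ < 1 →
      ∃ c : ℝ, 1 / 2 ≤ c ∧ c < 1 ∧
        ∀ A : Set X, MeasurableSet A → ENNReal.ofReal c ≤ μ A →
          ∀ r : ℝ, 0 ≤ r →
            1 - ENNReal.ofReal ((1 - c) / γ * γ ^ (r / r₀)) ≤
              μ {x | Metric.infDist x A ≤ r} := by
  intro γ hγlb hγ1
  have ha₁ : a₀ < 1 := by linarith
  set β : ℝ := -Real.log (1 - a₀) with hβ
  have hβ0 : 0 ≤ β := by
    have h := Real.log_nonpos (by linarith : (0:ℝ) ≤ 1 - a₀) (by linarith : 1 - a₀ ≤ 1)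
    simp only [hβ]; linarith
  have hlog2 : (0:ℝ) < Real.log 2 := Real.log_pos (by norm_num)
  have hγ0 : 0 < γ := lt_of_le_of_lt (div_nonneg hβ0 hlog2.le) hγlb
  have hβγ : β / γ < Real.log 2 := by
    rw [div_lt_iff₀ hlog2] at hγlb
    rw [div_lt_iff₀ hγ0]
    linarith
  set v₀ : ℝ := min (1 / 2) ((Real.log 2 - β / γ) / (1 + Real.log 2)) with hv₀def
  have hv₀pos : 0 < v₀ :=
    lt_min (by norm_num) (div_pos (by linarith) (by linarith))
  have hv₀half : v₀ ≤ 1 / 2 := min_le_left _ _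
  have hv₀cond : v₀ * (1 + Real.log 2) ≤ Real.log 2 - β / γ := by
    have h := min_le_right (1 / 2) ((Real.log 2 - β / γ) / (1 + Real.log 2))
    rw [← hv₀def] at h
    rw [le_div_iff₀ (by linarith : (0:ℝ) < 1 + Real.log 2)] at h
    linarith
  refine ⟨1 - v₀, by linarith, by linarith, ?_⟩
  intro A hA hμA r hr
  have hne : A.Nonempty := nonempty_of_measure_ne_zero
    (ne_of_gt (lt_of_lt_of_le (ENNReal.ofReal_pos.mpr (by linarith : (0:ℝ) < 1 - v₀)) hμA))
  -- iteration
  have key : ∀ k : ℕ, ENNReal.ofReal (1 - γ ^ k * v₀) ≤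
      μ {x | Metric.infDist x A ≤ (k : ℝ) * r₀} := by
    intro k
    induction k with
    | zero =>
      simp only [pow_zero, one_mul, Nat.cast_zero, zero_mul]
      refine le_trans hμA (measure_mono fun x hx => ?_)
      exact le_of_eq (Metric.infDist_zero_of_mem hx)
    | succ k ih =>
      set B : Set X := {x | Metric.infDist x A ≤ (k : ℝ) * r₀} with hBdef
      have hBmeas : MeasurableSet B :=
        (isClosed_le (Metric.continuous_infDist_pt A) continuous_const).measurableSet
      have hBne : B.Nonempty := by
        obtain ⟨a, ha⟩ := hne
        exact ⟨a, by
          show Metric.infDist a A ≤ (k : ℝ) * r₀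
          rw [Metric.infDist_zero_of_mem ha]; positivity⟩
      have hγk1 : γ ^ k ≤ 1 := pow_le_one₀ hγ0.le hγ1.le
      have hvpos : 0 < γ ^ k * v₀ := by positivity
      have hvle : γ ^ k * v₀ ≤ v₀ := by nlinarith
      have hstep := single_step μ p hp r₀ a₀ ha₀ ha₁ H γ hγ0 (γ ^ k * v₀) hvpos
        (by linarith)
        (by
          have h1 : γ ^ k * v₀ * (1 + Real.log 2) ≤ v₀ * (1 + Real.log 2) := by nlinarith
          rw [← hβ]
          linarith)
        B hBmeas hBne ih
      refine le_trans (le_of_eq ?_) (le_trans hstep (measure_mono fun z hz => ?_))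
      · congr 1; ring
      · show Metric.infDist z A ≤ ((k : ℕ) + 1 : ℕ) * r₀
        have hz' : Metric.infDist z B ≤ r₀ := hz
        push_cast
        refine le_of_forall_pos_le_add fun ε hε => ?_
        have hlt : Metric.infDist z B < r₀ + ε := lt_of_le_of_lt hz' (by linarith)
        obtain ⟨y, hyB, hdy⟩ := (Metric.infDist_lt_iff hBne).mp hlt
        have hyA : Metric.infDist y A ≤ (k : ℝ) * r₀ := hyB
        calc Metric.infDist z A ≤ Metric.infDist y A + dist z y :=
              Metric.infDist_le_infDist_add_dist
          _ ≤ (k : ℝ) * r₀ + (r₀ + ε) := add_le_add hyA hdy.le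
          _ = ((k : ℝ) + 1) * r₀ + ε := by ring
  -- conclude
  set k : ℕ := ⌊r / r₀⌋₊ with hkdef
  have hkr : (k : ℝ) * r₀ ≤ r := by
    have h := Nat.floor_le (div_nonneg hr hr₀.le)
    rw [← hkdef] at h
    calc (k : ℝ) * r₀ ≤ (r / r₀) * r₀ := by nlinarith
      _ = r := by field_simp
  have hμr : ENNReal.ofReal (1 - γ ^ k * v₀) ≤ μ {x | Metric.infDist x A ≤ r} := by
    refine le_trans (key k) (measure_mono fun x hx => ?_)
    exact le_trans hx hkr
  have hrk : r / r₀ ≤ (k : ℝ) + 1 := (Nat.lt_floor_add_one _).le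
  have hrp : γ ^ (((k : ℝ)) + 1) ≤ γ ^ (r / r₀) :=
    Real.rpow_le_rpow_of_exponent_ge hγ0 hγ1.le hrk
  have hnat : γ ^ (((k : ℝ)) + 1) = γ ^ (k + 1) := by
    rw [show ((k : ℝ) + 1) = ((k + 1 : ℕ) : ℝ) by push_cast; ring, Real.rpow_natCast]
  have hineq : γ ^ k * v₀ ≤ (1 - (1 - v₀)) / γ * γ ^ (r / r₀) := by
    have h1 : (1 - (1 - v₀)) / γ * γ ^ (((k : ℝ)) + 1) ≤
        (1 - (1 - v₀)) / γ * γ ^ (r / r₀) :=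
      mul_le_mul_of_nonneg_left hrp
        (by have hv : (1 - (1 - v₀)) = v₀ := by ring
            rw [hv]; positivity)
    have h2 : (1 - (1 - v₀)) / γ * γ ^ (((k : ℝ)) + 1) = γ ^ k * v₀ := by
      rw [hnat, pow_succ]
      field_simp
      ring
    linarith
  rw [tsub_le_iff_right]
  calc (1 : ENNReal) = ENNReal.ofReal ((1 - γ ^ k * v₀) + γ ^ k * v₀) := by
        rw [show (1 - γ ^ k * v₀) + γ ^ k * v₀ = 1 by ring, ENNReal.ofReal_one]
    _ ≤ ENNReal.ofReal (1 - γ ^ k * v₀) + ENNReal.ofReal (γ ^ k * v₀) :=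
        ENNReal.ofReal_add_le
    _ ≤ μ {x | Metric.infDist x A ≤ r} +
        ENNReal.ofReal ((1 - (1 - v₀)) / γ * γ ^ (r / r₀)) :=
        add_le_add hμr (ENNReal.ofReal_le_ofReal hineq)
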